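/- For every integer m ∈ ℤ one has V + c_m ⊆ V: if v ∈ V then v + c_m ∈ V. -/

import Mathlib

/-- `e(w) = exp(2πiw)`. -/
noncomputable def e (w : ℂ) : ℂ := Complex.exp (2 * Real.pi * Complex.I * w)

/-- The Fredholm series `f(z) = ∑_{n=0}^∞ z^{2^n}`. -/
noncomputable def f (z : ℂ) : ℂ := ∑' n : ℕ, z ^ (2 ^ n)

/-- `F(w) = f(e(w)) = ∑_{n=0}^∞ e(2^n w)` on the upper half-plane. -/
noncomputable def F (w : ℂ) : ℂ := ∑' n : ℕ, e ((2 ^ n : ℕ) * w)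

/-- `G(w) = ∑_{l=1}^∞ e(−1/2^l)(e(w/2^l) − 1)` (indexing: `l = l' + 1`, `l' : ℕ`). -/
noncomputable def G (w : ℂ) : ℂ :=
  ∑' l : ℕ, e (-(1 / 2 ^ (l + 1))) * (e (w / 2 ^ (l + 1)) - 1)

/-- `S = F + G` on the upper half-plane. -/
noncomputable def S (w : ℂ) : ℂ := F w + G w

/-- The upper half-plane `ℍ = {w : ℂ | Im w > 0}`. -/
def UHP : Set ℂ := {w : ℂ | 0 < w.im}

/-- `V = S(ℍ)`, the image of `S` on the upper half-plane. -/
noncomputable def V : Set ℂ := S '' UHP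

/-- `c_m = ∑_{l=1}^∞ (e(m/2^l) − 1)` (indexing: `l = l' + 1`, `l' : ℕ`). -/
noncomputable def c (m : ℤ) : ℂ := ∑' l : ℕ, (e ((m : ℂ) / 2 ^ (l + 1)) - 1)


open Complex Metric

/-- Auxiliary constant for geometric bounds. -/
noncomputable def K (t : ℝ) : ℝ := 4 * Real.pi * t * Real.exp (2 * Real.pi * t)

/-- The error term in the shift identity. -/
noncomputable def E (z : ℂ) (N : ℤ) : ℂ :=
  ∑' l : ℕ, (e ((z - 1) / 2 ^ (l+1)) - 1) * (e ((N:ℂ) / 2 ^ (l+1)) - 1)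


lemma e_add (x y : ℂ) : e (x + y) = e x * e y := by
  simp only [e, mul_add, Complex.exp_add]

lemma e_int (n : ℤ) : e (n : ℂ) = 1 := by
  simp only [e]
  rw [show 2 * (Real.pi : ℂ) * Complex.I * (n : ℂ) = (n : ℂ) * (2 * Real.pi * Complex.I) by ring]
  exact Complex.exp_int_mul_two_pi_mul_I n

lemma e_add_int (w : ℂ) (n : ℤ) : e (w + (n : ℂ)) = e w := by
  rw [e_add, e_int, mul_one]

lemma norm_e (w : ℂ) : ‖e w‖ = Real.exp (-(2 * Real.pi * w.im)) := by
  rw [e, Complex.norm_exp]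
  congr 1
  simp [Complex.mul_re, Complex.mul_im]

lemma norm_e_real (x : ℝ) : ‖e (x : ℂ)‖ = 1 := by
  rw [norm_e]; simp

lemma norm_e_le_one {w : ℂ} (hw : 0 ≤ w.im) : ‖e w‖ ≤ 1 := by
  rw [norm_e, Real.exp_le_one_iff]
  simp only [neg_nonpos]
  positivity

lemma norm_two_pi_I_mul (w : ℂ) : ‖2 * (Real.pi : ℂ) * Complex.I * w‖ = 2 * Real.pi * ‖w‖ := by
  simp [norm_mul, _root_.abs_of_nonneg Real.pi_pos.le]

lemma norm_exp_sub_one_le_glob (z : ℂ) : ‖Complex.exp z - 1‖ ≤ 2 * ‖z‖ * Real.exp ‖z‖ := by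
  rcases le_or_gt ‖z‖ 1 with h | h
  · calc ‖Complex.exp z - 1‖ ≤ 2 * ‖z‖ := by
          simpa using Complex.norm_exp_sub_one_le (x := z) h
      _ ≤ 2 * ‖z‖ * Real.exp ‖z‖ := by
          nth_rw 1 [← mul_one (2 * ‖z‖)]
          gcongr
          exact Real.one_le_exp (norm_nonneg z)
  · calc ‖Complex.exp z - 1‖ ≤ ‖Complex.exp z‖ + 1 := (norm_sub_le _ _).trans (by simp)
      _ ≤ Real.exp ‖z‖ + 1 := by
          gcongr
          rw [Complex.norm_exp]
          exact Real.exp_le_exp.mpr (Complex.re_le_norm z)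
      _ ≤ 2 * ‖z‖ * Real.exp ‖z‖ := by
          have h1 : (1:ℝ) ≤ ‖z‖ := h.le
          have h2 : (1:ℝ) ≤ Real.exp ‖z‖ := Real.one_le_exp (norm_nonneg z)
          nlinarith

/-- geometric-type constant. -/
lemma K_nonneg {t : ℝ} (ht : 0 ≤ t) : 0 ≤ K t := by
  unfold K; positivity

lemma K_mono {s t : ℝ} (hs : 0 ≤ s) (hst : s ≤ t) : K s ≤ K t := by
  unfold K
  have := Real.pi_pos
  gcongr <;> nlinarith

lemma norm_div_two_pow (w : ℂ) (l : ℕ) : ‖w / 2 ^ (l+1)‖ = ‖w‖ / 2 ^ (l+1) := by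
  rw [norm_div, norm_pow]
  norm_num

lemma norm_e_div_sub_one_le (w : ℂ) (l : ℕ) :
    ‖e (w / 2 ^ (l+1)) - 1‖ ≤ K ‖w‖ * (1/2) ^ l := by
  have h2 : (0:ℝ) < 2 ^ (l+1) := by positivity
  have hle : ‖w‖ / 2 ^ (l+1) ≤ ‖w‖ := by
    rw [div_le_iff₀ h2]
    nth_rw 1 [← mul_one ‖w‖]
    gcongr
    exact one_le_pow₀ (by norm_num)
  calc ‖e (w / 2 ^ (l+1)) - 1‖
      ≤ 2 * ‖2 * (Real.pi:ℂ) * Complex.I * (w / 2^(l+1))‖ *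
        Real.exp ‖2 * (Real.pi:ℂ) * Complex.I * (w / 2^(l+1))‖ :=
        norm_exp_sub_one_le_glob _
    _ = 2 * (2 * Real.pi * (‖w‖ / 2^(l+1))) * Real.exp (2 * Real.pi * (‖w‖ / 2^(l+1))) := by
        rw [norm_two_pi_I_mul, norm_div_two_pow]
    _ ≤ 2 * (2 * Real.pi * (‖w‖ / 2^(l+1))) * Real.exp (2 * Real.pi * ‖w‖) := by
        have := Real.pi_pos
        gcongr
    _ ≤ K ‖w‖ * (1/2) ^ l := by
        unfold K
        rw [div_pow, one_pow]
        have h2l : (0:ℝ) < 2 ^ l := by positivity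
        have hexp : (0:ℝ) < Real.exp (2 * Real.pi * ‖w‖) := Real.exp_pos _
        have hpi := Real.pi_pos
        have hw := norm_nonneg w
        rw [pow_succ]
        have key : 2 * (2 * Real.pi * (‖w‖ / (2 ^ l * 2))) * Real.exp (2 * Real.pi * ‖w‖)
            = 2 * Real.pi * ‖w‖ * Real.exp (2 * Real.pi * ‖w‖) * (1 / 2 ^ l) := by
          field_simp
        rw [key]
        have h1 : (0:ℝ) ≤ 1/2^l := by positivity
        nlinarith [mul_nonneg (mul_nonneg hpi.le hw) hexp.le]

lemma norm_e_coef (l : ℕ) : ‖e (-(1 / 2 ^ (l+1)) : ℂ)‖ = 1 := by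
  have h : (-(1 / 2 ^ (l+1)) : ℂ) = ((-(1 / 2 ^ (l+1)) : ℝ) : ℂ) := by push_cast; ring
  rw [h, norm_e_real]

lemma norm_e_int_div_sub_one_le_two (N : ℤ) (l : ℕ) : ‖e ((N:ℂ) / 2 ^ (l+1)) - 1‖ ≤ 2 := by
  have h : ((N:ℂ) / 2 ^ (l+1)) = (((N:ℝ) / 2 ^ (l+1) : ℝ) : ℂ) := by push_cast; ring
  calc ‖e ((N:ℂ) / 2 ^ (l+1)) - 1‖ ≤ ‖e ((N:ℂ) / 2 ^ (l+1))‖ + 1 := (norm_sub_le _ _).trans (by simp)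
    _ ≤ 2 := by rw [h, norm_e_real]; norm_num

lemma summable_geom_half (C : ℝ) : Summable (fun l : ℕ => C * (1/2) ^ l) :=
  (summable_geometric_of_lt_one (by norm_num) (by norm_num)).mul_left C

lemma summable_c_terms (x : ℂ) : Summable (fun l : ℕ => e (x / 2 ^ (l+1)) - 1) :=
  Summable.of_norm_bounded (summable_geom_half (K ‖x‖)) (fun l => norm_e_div_sub_one_le x l)

lemma summable_G_terms (w : ℂ) :
    Summable (fun l : ℕ => e (-(1 / 2 ^ (l+1))) * (e (w / 2 ^ (l+1)) - 1)) := by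
  apply Summable.of_norm_bounded (summable_geom_half (K ‖w‖))
  intro l
  rw [norm_mul, norm_e_coef, one_mul]
  exact norm_e_div_sub_one_le w l

lemma summable_E_terms (z : ℂ) (N : ℤ) :
    Summable (fun l : ℕ => (e ((z - 1) / 2 ^ (l+1)) - 1) * (e ((N:ℂ) / 2 ^ (l+1)) - 1)) := by
  apply Summable.of_norm_bounded (summable_geom_half (K ‖z - 1‖ * 2))
  intro l
  rw [norm_mul]
  calc ‖e ((z-1)/2^(l+1)) - 1‖ * ‖e ((N:ℂ)/2^(l+1)) - 1‖
      ≤ (K ‖z-1‖ * (1/2)^l) * 2 :=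
        mul_le_mul (norm_e_div_sub_one_le _ l) (norm_e_int_div_sub_one_le_two N l)
          (norm_nonneg _) (mul_nonneg (K_nonneg (norm_nonneg _)) (by positivity))
    _ = K ‖z-1‖ * 2 * (1/2)^l := by ring

lemma summable_F_terms {w : ℂ} (hw : 0 < w.im) :
    Summable (fun n : ℕ => e ((2 ^ n : ℕ) * w)) := by
  set r : ℝ := Real.exp (-(2 * Real.pi * w.im)) with hr
  have hr0 : 0 ≤ r := Real.exp_nonneg _
  have hr1 : r < 1 := by
    rw [hr, Real.exp_lt_one_iff]
    have := Real.pi_pos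
    nlinarith
  apply Summable.of_norm_bounded (summable_geometric_of_lt_one hr0 hr1)
  intro n
  have him : (((2:ℕ) ^ n : ℕ) * w : ℂ).im = (2:ℝ) ^ n * w.im := by
    rw [show (((2:ℕ) ^ n : ℕ) : ℂ) = (((2:ℝ) ^ n : ℝ) : ℂ) by push_cast; ring,
      Complex.im_ofReal_mul]
  rw [norm_e, him]
  have : Real.exp (-(2 * Real.pi * ((2:ℝ) ^ n * w.im))) = r ^ (2 ^ n : ℕ) := by
    rw [hr, ← Real.exp_nat_mul]
    push_cast
    ring_nf
  rw [this]
  exact pow_le_pow_of_le_one hr0 hr1.le (Nat.lt_two_pow_self (n := n)).le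

lemma F_periodic (z : ℂ) (N : ℤ) : F (z + (N:ℂ)) = F z := by
  unfold F
  refine tsum_congr fun n => ?_
  have h : ((2^n : ℕ) : ℂ) * (z + (N:ℂ)) = (2^n : ℕ) * z + (((2^n * N : ℤ)) : ℂ) := by
    push_cast; ring
  rw [h, e_add_int]

lemma G_shift (z : ℂ) (N : ℤ) : G (z + (N:ℂ)) = G z + c N + E z N := by
  have hterm : ∀ l : ℕ, e (-(1/2^(l+1))) * (e ((z + (N:ℂ))/2^(l+1)) - 1)
      = (e (-(1/2^(l+1))) * (e (z/2^(l+1)) - 1) + (e ((N:ℂ)/2^(l+1)) - 1))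
        + (e ((z-1)/2^(l+1)) - 1) * (e ((N:ℂ)/2^(l+1)) - 1) := by
    intro l
    have h1 : (z + (N:ℂ))/2^(l+1) = z/2^(l+1) + (N:ℂ)/2^(l+1) := by ring
    have h2 : (z - 1)/2^(l+1) = -(1/2^(l+1)) + z/2^(l+1) := by ring
    rw [h1, h2, e_add, e_add]
    ring
  calc G (z + (N:ℂ))
      = ∑' l : ℕ, ((e (-(1/2^(l+1))) * (e (z/2^(l+1)) - 1) + (e ((N:ℂ)/2^(l+1)) - 1))
        + (e ((z-1)/2^(l+1)) - 1) * (e ((N:ℂ)/2^(l+1)) - 1)) := tsum_congr hterm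
    _ = G z + c N + E z N := by
        rw [Summable.tsum_add ((summable_G_terms z).add (summable_c_terms (N:ℂ))) (summable_E_terms z N),
          Summable.tsum_add (summable_G_terms z) (summable_c_terms (N:ℂ))]
        rfl

lemma S_shift (z : ℂ) (N : ℤ) : S (z + (N:ℂ)) = S z + c N + E z N := by
  unfold S
  rw [F_periodic, G_shift]
  ring

lemma c_double (N : ℤ) : c (2 * N) = c N := by
  have hg : Summable (fun l : ℕ => e ((N:ℂ) / 2 ^ l) - 1) := by
    rw [← summable_nat_add_iff 1]
    exact summable_c_terms (N:ℂ)
  calc c (2 * N) = ∑' l : ℕ, (e ((N:ℂ) / 2 ^ l) - 1) := by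
        unfold c
        refine tsum_congr fun l => ?_
        congr 2
        push_cast
        rw [pow_succ]
        field_simp
    _ = (e ((N:ℂ) / 2 ^ 0) - 1) + ∑' l : ℕ, (e ((N:ℂ) / 2 ^ (l+1)) - 1) := Summable.tsum_eq_zero_add hg
    _ = c N := by
        rw [show ((N:ℂ) / 2 ^ 0) = ((N:ℤ):ℂ) by norm_num, e_int]
        simp [c]

lemma c_two_pow_mul (k : ℕ) (m : ℤ) : c (2 ^ k * m) = c m := by
  induction k with
  | zero => norm_num
  | succ k ih => rw [show (2:ℤ)^(k+1) * m = 2 * (2^k * m) by ring, c_double, ih]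

lemma E_bound (z : ℂ) (m : ℤ) (k : ℕ) :
    ‖E z (2 ^ k * m)‖ ≤ 4 * K ‖z - 1‖ * (1/2) ^ k := by
  set N : ℤ := 2 ^ k * m with hN
  set f : ℕ → ℂ := fun l => (e ((z - 1) / 2 ^ (l+1)) - 1) * (e ((N:ℂ) / 2 ^ (l+1)) - 1) with hf
  have hzero : ∀ l < k, f l = 0 := by
    intro l hl
    have hlk : l + 1 ≤ k := hl
    have harg : ((N:ℤ):ℂ) / 2 ^ (l+1) = (((2^(k-(l+1)) * m : ℤ)) : ℂ) := by
      push_cast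
      have h2 : ((2:ℂ)) ^ (k-(l+1)) * 2 ^ (l+1) = 2 ^ k := by
        rw [← pow_add, Nat.sub_add_cancel hlk]
      field_simp
      rw [hN]
      push_cast
      rw [← h2]
      ring
    simp only [hf]
    rw [harg, e_int]
    ring
  have hsum : Summable f := summable_E_terms z N
  have hsplit := Summable.sum_add_tsum_nat_add (f := f) k hsum
  have hfin : (∑ i ∈ Finset.range k, f i) = 0 :=
    Finset.sum_eq_zero fun i hi => hzero i (Finset.mem_range.mp hi)
  have hE : E z N = ∑' i : ℕ, f (i + k) := by
    unfold E
    rw [← hsplit, hfin, zero_add]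
  rw [hE]
  have hb : ∀ i : ℕ, ‖f (i + k)‖ ≤ (2 * K ‖z-1‖ * (1/2)^k) * (1/2)^i := by
    intro i
    simp only [hf]
    rw [norm_mul]
    calc ‖e ((z-1)/2^(i+k+1)) - 1‖ * ‖e ((N:ℂ)/2^(i+k+1)) - 1‖
        ≤ (K ‖z-1‖ * (1/2)^(i+k)) * 2 :=
          mul_le_mul (norm_e_div_sub_one_le _ _) (norm_e_int_div_sub_one_le_two N _)
            (norm_nonneg _) (mul_nonneg (K_nonneg (norm_nonneg _)) (by positivity))
      _ = (2 * K ‖z-1‖ * (1/2)^k) * (1/2)^i := by rw [pow_add]; ring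
  calc ‖∑' i : ℕ, f (i + k)‖ ≤ ∑' i : ℕ, ((2 * K ‖z-1‖ * (1/2)^k) * (1/2)^i) := by
        refine tsum_of_norm_bounded ?_ hb
        exact (Summable.hasSum ((summable_geometric_of_lt_one (by norm_num) (by norm_num)).mul_left _))
    _ = (2 * K ‖z-1‖ * (1/2)^k) * 2 := by
        rw [tsum_mul_left, tsum_geometric_of_lt_one (by norm_num) (by norm_num)]
        norm_num
    _ = 4 * K ‖z-1‖ * (1/2)^k := by ring

lemma e_differentiable : Differentiable ℂ e := by
  unfold e
  exact Complex.differentiable_exp.comp ((differentiable_const _).mul differentiable_id)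

lemma G_differentiable : Differentiable ℂ G := by
  intro w₀
  set R : ℝ := ‖w₀‖ + 1 with hR
  have hdon : DifferentiableOn ℂ
      (fun w : ℂ => ∑' l : ℕ, e (-(1 / 2 ^ (l + 1))) * (e (w / 2 ^ (l + 1)) - 1))
      (ball (0:ℂ) R) := by
    apply differentiableOn_tsum_of_summable_norm
      (u := fun l : ℕ => K R * (1/2)^l)
      ((summable_geometric_of_lt_one (by norm_num) (by norm_num)).mul_left _)
    · intro l
      apply Differentiable.differentiableOn
      exact (differentiable_const _).mul
        ((e_differentiable.comp (differentiable_id.div_const _)).sub (differentiable_const _))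
    · exact isOpen_ball
    · intro l w hw
      rw [norm_mul, norm_e_coef, one_mul]
      refine (norm_e_div_sub_one_le w l).trans ?_
      have hwR : ‖w‖ ≤ R := by
        have := mem_ball_zero_iff.mp hw
        linarith
      have : K ‖w‖ ≤ K R := K_mono (norm_nonneg _) hwR
      have hp : (0:ℝ) ≤ (1/2:ℝ)^l := by positivity
      nlinarith
  have hmem : w₀ ∈ ball (0:ℂ) R := by
    rw [mem_ball_zero_iff, hR]
    linarith
  exact hdon.differentiableAt (isOpen_ball.mem_nhds hmem)


lemma F_differentiableOn {δ : ℝ} (hδ : 0 < δ) :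
    DifferentiableOn ℂ F {z : ℂ | δ < z.im} := by
  set r : ℝ := Real.exp (-(2 * Real.pi * δ)) with hr
  have hr0 : 0 ≤ r := Real.exp_nonneg _
  have hr1 : r < 1 := by
    rw [hr, Real.exp_lt_one_iff]
    have := Real.pi_pos
    nlinarith
  apply differentiableOn_tsum_of_summable_norm
    (u := fun n : ℕ => r ^ n) (summable_geometric_of_lt_one hr0 hr1)
  · intro n
    apply Differentiable.differentiableOn
    exact e_differentiable.comp ((differentiable_const _).mul differentiable_id)
  · exact isOpen_lt continuous_const Complex.continuous_im
  · intro n w hw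
    have hw' : δ < w.im := hw
    have him : (((2:ℕ) ^ n : ℕ) * w : ℂ).im = (2:ℝ) ^ n * w.im := by
      rw [show (((2:ℕ) ^ n : ℕ) : ℂ) = (((2:ℝ) ^ n : ℝ) : ℂ) by push_cast; ring,
        Complex.im_ofReal_mul]
    rw [norm_e, him]
    have step1 : Real.exp (-(2 * Real.pi * ((2:ℝ) ^ n * w.im))) ≤ r ^ (2 ^ n : ℕ) := by
      have : r ^ (2^n : ℕ) = Real.exp (-(2 * Real.pi * ((2:ℝ)^n * δ))) := by
        rw [hr, ← Real.exp_nat_mul]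
        push_cast
        ring_nf
      rw [this, Real.exp_le_exp]
      have h2n : (0:ℝ) < (2:ℝ)^n := by positivity
      have hmul : (2:ℝ)^n * δ ≤ (2:ℝ)^n * w.im := by nlinarith
      nlinarith [mul_le_mul_of_nonneg_left hmul (by positivity : (0:ℝ) ≤ 2*Real.pi)]
    refine step1.trans ?_
    exact pow_le_pow_of_le_one hr0 hr1.le (Nat.lt_two_pow_self (n := n)).le

lemma S_differentiableOn : DifferentiableOn ℂ S UHP := by
  intro z hz
  have hz' : 0 < z.im := hz
  apply DifferentiableAt.differentiableWithinAt
  have hF : DifferentiableAt ℂ F z := by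
    have hopen : IsOpen {w : ℂ | z.im / 2 < w.im} := isOpen_lt continuous_const Complex.continuous_im
    exact (F_differentiableOn (by linarith)).differentiableAt
      (hopen.mem_nhds (by simp only [Set.mem_setOf_eq]; linarith))
  exact hF.add (G_differentiable z)

lemma c_one_im_pos : 0 < (c 1).im := by
  have hsum : Summable (fun l : ℕ => e (((1:ℤ):ℂ) / 2 ^ (l+1)) - 1) := summable_c_terms _
  have him : ∀ l : ℕ, (e (((1:ℤ):ℂ) / 2 ^ (l+1)) - 1).im = Real.sin (2 * Real.pi / 2 ^ (l+1)) := by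
    intro l
    have harg : 2 * (Real.pi:ℂ) * Complex.I * (((1:ℤ):ℂ) / 2 ^ (l+1))
        = ((2 * Real.pi / 2 ^ (l+1) : ℝ) : ℂ) * Complex.I := by
      push_cast
      ring
    rw [Complex.sub_im, e, harg, Complex.exp_ofReal_mul_I_im]
    simp
  rw [c, Complex.im_tsum hsum]
  have hsum_im : Summable (fun l : ℕ => (e (((1:ℤ):ℂ) / 2 ^ (l+1)) - 1).im) :=
    (Complex.hasSum_im hsum.hasSum).summable
  refine Summable.tsum_pos hsum_im (fun l => ?_) 1 ?_
  · rw [him l]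
    apply Real.sin_nonneg_of_nonneg_of_le_pi
    · positivity
    · rw [div_le_iff₀ (by positivity)]
      have h2 : (2:ℝ) ≤ 2 ^ (l+1) := by
        calc (2:ℝ) = 2^1 := by norm_num
        _ ≤ 2^(l+1) := by
          apply pow_le_pow_right₀ (by norm_num)
          omega
      nlinarith [Real.pi_pos]
  · rw [him 1]
    have : (2:ℝ) * Real.pi / 2 ^ (1+1) = Real.pi / 2 := by ring
    rw [this, Real.sin_pi_div_two]
    norm_num

lemma c_one_ne_zero : c 1 ≠ 0 := by
  intro h
  have := c_one_im_pos
  rw [h] at this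
  simp at this

lemma isOpen_UHP : IsOpen UHP := isOpen_lt continuous_const Complex.continuous_im

lemma mem_UHP_add_int {z : ℂ} (hz : z ∈ UHP) (N : ℤ) : z + (N:ℂ) ∈ UHP := by
  simp only [UHP, Set.mem_setOf_eq, Complex.add_im, Complex.intCast_im, add_zero] at *
  exact hz

/-- For every integer `m`, one has `V + c_m ⊆ V`. -/

theorem V_add_cm_subset_V (m : ℤ) (v : ℂ) (hv : v ∈ V) : v + c m ∈ V := by
  obtain ⟨w, hw, hSw⟩ := hv
  by_cases hcase : ∃ r > 0, closedBall w r ⊆ UHP ∧ ∀ z ∈ sphere w r, S z ≠ v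
  · obtain ⟨r, hr, hball, hsph⟩ := hcase
    have hScont : ContinuousOn S (closedBall w r) := (S_differentiableOn.mono hball).continuousOn
    have hcpt : IsCompact (sphere w r) := isCompact_sphere w r
    have hne : (sphere w r).Nonempty := NormedSpace.sphere_nonempty.mpr hr.le
    obtain ⟨z₀, hz₀, hmin⟩ := hcpt.exists_isMinOn hne
      (((hScont.mono sphere_subset_closedBall).sub continuousOn_const).norm)
    set ε : ℝ := ‖S z₀ - v‖ with hε_def
    have hε : 0 < ε := by
      rw [hε_def, norm_pos_iff, sub_ne_zero]
      exact hsph z₀ hz₀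
    set ρ : ℝ := ‖w‖ + r + 1 with hρ
    have hρ0 : 0 ≤ ρ := by positivity
    have hKρ : 0 < 4 * K ρ + 1 := by nlinarith [K_nonneg hρ0]
    obtain ⟨k, hk⟩ := exists_pow_lt_of_lt_one
      (div_pos (show (0:ℝ) < ε/2 by linarith) hKρ) (show (1:ℝ)/2 < 1 by norm_num)
    set δ : ℝ := (4 * K ρ + 1) * (1/2:ℝ)^k with hδ_def
    have hδ0 : 0 ≤ δ := by positivity
    have hδ : δ < ε / 2 := by
      rw [hδ_def]
      rw [lt_div_iff₀ hKρ] at hk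
      linarith [hk]
    set N : ℤ := 2^k * m with hN
    -- norm bound for z-1 with z in the ball
    have hz1 : ∀ z ∈ closedBall w r, ‖z - 1‖ ≤ ρ := by
      intro z hz
      have : ‖z - w‖ ≤ r := by
        rw [← dist_eq_norm]
        exact mem_closedBall.mp hz
      calc ‖z - 1‖ = ‖(z - w) + w + (-1)‖ := by ring_nf
        _ ≤ ‖z - w‖ + ‖w‖ + ‖(-1 : ℂ)‖ := by
            refine (norm_add_le _ _).trans ?_
            gcongr
            exact norm_add_le _ _
        _ ≤ ρ := by
            rw [hρ]
            simp only [norm_neg, norm_one]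
            linarith
    have hEb : ∀ z ∈ closedBall w r, ‖E z N‖ ≤ δ := by
      intro z hz
      refine (E_bound z m k).trans ?_
      rw [hδ_def]
      have h1 : K ‖z-1‖ ≤ K ρ := K_mono (norm_nonneg _) (hz1 z hz)
      have hp : (0:ℝ) ≤ (1/2:ℝ)^k := by positivity
      nlinarith
    set h : ℂ → ℂ := fun z => S (z + (N:ℂ)) - (v + c m) with hh
    have hdecomp : ∀ z : ℂ, h z = (S z - v) + E z N := by
      intro z
      rw [hh]
      simp only
      rw [S_shift z N, hN, c_two_pow_mul k m]
      ring
    have hzero : ∃ z ∈ closedBall w r, h z = 0 := by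
      by_contra hcon
      push_neg at hcon
      have hdiffh : DifferentiableOn ℂ h (closedBall w r) := by
        intro z hz
        apply DifferentiableAt.differentiableWithinAt
        have hzU : z + (N:ℂ) ∈ UHP := mem_UHP_add_int (hball hz) N
        have hS : DifferentiableAt ℂ S (z + (N:ℂ)) :=
          S_differentiableOn.differentiableAt (isOpen_UHP.mem_nhds hzU)
        exact (hS.comp z ((differentiable_id.add_const _) z)).sub_const _
      have hinv : DifferentiableOn ℂ (fun z => (h z)⁻¹) (closedBall w r) :=
        hdiffh.inv hcon
      have hdcc : DiffContOnCl ℂ (fun z => (h z)⁻¹) (ball w r) := by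
        apply DifferentiableOn.diffContOnCl
        rw [closure_ball w hr.ne']
        exact hinv
      have hεδ : 0 < ε - δ := by linarith
      have hfront : ∀ z ∈ frontier (ball w r), ‖(h z)⁻¹‖ ≤ (ε - δ)⁻¹ := by
        intro z hz
        rw [frontier_ball w hr.ne'] at hz
        have hlow : ε - δ ≤ ‖h z‖ := by
          rw [hdecomp z]
          have h1 : ε ≤ ‖S z - v‖ := hmin hz
          have h2 : ‖E z N‖ ≤ δ := hEb z (sphere_subset_closedBall hz)
          calc ε - δ ≤ ‖S z - v‖ - ‖E z N‖ := by linarith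
            _ ≤ ‖(S z - v) + E z N‖ := by
                have := norm_add_le (S z - v + E z N) (-(E z N))
                simp only [add_neg_cancel_right, norm_neg] at this
                linarith
        rw [norm_inv]
        exact inv_anti₀ hεδ hlow
      have hmax := Complex.norm_le_of_forall_mem_frontier_norm_le isBounded_ball hdcc hfront
        (z := w) (by rw [closure_ball w hr.ne']; exact mem_closedBall_self hr.le)
      have hwball : w ∈ closedBall w r := mem_closedBall_self hr.le
      have hhw : ‖h w‖ ≤ δ := by
        rw [hdecomp w, hSw, sub_self, zero_add]
        exact hEb w hwball
      have hpos : 0 < ‖h w‖ := norm_pos_iff.mpr (hcon w hwball)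
      rw [norm_inv] at hmax
      have : ε - δ ≤ ‖h w‖ := by
        rwa [inv_le_inv₀ hpos hεδ] at hmax
      linarith
    obtain ⟨z, hz, hz0⟩ := hzero
    refine ⟨z + (N:ℂ), mem_UHP_add_int (hball hz) N, ?_⟩
    have := hz0
    rw [hh] at this
    simp only at this
    linear_combination this
  · push_neg at hcase
    exfalso
    obtain ⟨r₀, hr₀, hball₀⟩ : ∃ r₀ > 0, closedBall w r₀ ⊆ UHP := by
      obtain ⟨ε, hε, hsub⟩ := Metric.isOpen_iff.mp isOpen_UHP w hw
      exact ⟨ε/2, by linarith, fun z hz =>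
        hsub (lt_of_le_of_lt (mem_closedBall.mp hz) (by linarith))⟩
    have hfreq : ∃ᶠ z in nhdsWithin w {w}ᶜ, S z = v := by
      rw [Filter.frequently_iff]
      intro U hU
      rw [mem_nhdsWithin] at hU
      obtain ⟨t, ht_open, hwt, hsub⟩ := hU
      obtain ⟨η, hη, hηsub⟩ := Metric.isOpen_iff.mp ht_open w hwt
      set r : ℝ := min (η/2) r₀ with hrdef
      have hrpos : 0 < r := lt_min (by linarith) hr₀
      have hrball : closedBall w r ⊆ UHP := fun z hz =>
        hball₀ (closedBall_subset_closedBall (min_le_right _ _) hz)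
      obtain ⟨z, hzs, hzv⟩ := hcase r hrpos hrball
      refine ⟨z, hsub ⟨hηsub ?_, ?_⟩, hzv⟩
      · rw [mem_ball, mem_sphere] at *
        rw [hzs]
        calc r ≤ η/2 := min_le_left _ _
          _ < η := by linarith
      · simp only [Set.mem_compl_iff, Set.mem_singleton_iff]
        intro hzw
        rw [hzw] at hzs
        rw [mem_sphere, dist_self] at hzs
        linarith [hrpos.trans_eq hzs.symm, hzs]
    have hpreconn : IsPreconnected UHP := (convex_halfSpace_im_gt (0:ℝ)).isPreconnected
    have hanalytic : AnalyticOnNhd ℂ S UHP :=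
      S_differentiableOn.analyticOnNhd isOpen_UHP
    have heq : Set.EqOn S (fun _ => v) UHP :=
      hanalytic.eqOn_of_preconnected_of_frequently_eq analyticOnNhd_const hpreconn hw hfreq
    -- derive c 1 = 0
    have hI : Complex.I ∈ UHP := by simp [UHP]
    have hkey : ∀ k : ℕ, c 1 = - E Complex.I (2^k * 1) := by
      intro k
      have h1 := S_shift Complex.I (2^k * 1)
      have h2 : S (Complex.I + ((2^k * 1 : ℤ):ℂ)) = v := heq (mem_UHP_add_int hI _)
      have h3 : S Complex.I = v := heq hI
      rw [h2, h3, c_two_pow_mul k 1] at h1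
      linear_combination -h1
    have hc10 : c 1 = 0 := by
      by_contra hne
      have hpos : 0 < ‖c 1‖ := norm_pos_iff.mpr hne
      set B : ℝ := 4 * K ‖Complex.I - 1‖ + 1 with hB
      have hB0 : 0 < B := by nlinarith [K_nonneg (norm_nonneg (Complex.I - 1))]
      obtain ⟨k, hk⟩ := exists_pow_lt_of_lt_one
        (show (0:ℝ) < ‖c 1‖ / B by positivity) (show (1:ℝ)/2 < 1 by norm_num)
      have hE1 : ‖c 1‖ ≤ 4 * K ‖Complex.I - 1‖ * (1/2)^k := by
        rw [hkey k, norm_neg]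
        exact E_bound Complex.I 1 k
      rw [lt_div_iff₀ hB0] at hk
      have hp : (0:ℝ) ≤ (1/2:ℝ)^k := by positivity
      nlinarith
    exact c_one_ne_zero hc10
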